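/- Let H be an r-uniform hypergraph with r ≥ 3 in which every vertex is contained in at most 2 hyperedges (Δ(H) ≤ 2). Then τ(H) ≤ (r − 1)·ν(H), where τ is the vertex cover number and ν the matching number. -/

import Mathlib

private lemma cover_intersecting {V : Type*} [DecidableEq V]
    (e : Finset V) (S : Finset (Finset V)) :
    (∀ f ∈ S, ∀ g ∈ S, f ≠ g → ¬ Disjoint f g) →
    (∀ f ∈ S, ¬ Disjoint f e) →
    ∃ T : Finset V, T.card ≤ (S.card + 1) / 2 ∧ (∀ f ∈ S, ∃ v ∈ T, v ∈ f) ∧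
      (S.card % 2 = 1 → ∃ v ∈ T, v ∈ e) := by
  classical
  induction S using Finset.strongInduction with
  | _ S ih =>
    intro h1 h2
    rcases S.eq_empty_or_nonempty with rfl | ⟨f, hf⟩
    · exact ⟨∅, by simp⟩
    rcases (S.erase f).eq_empty_or_nonempty with herase | ⟨g, hg⟩
    · -- S = {f}
      have hcard : S.card = 1 := by
        have := Finset.card_erase_of_mem hf
        rw [herase] at this
        simp at this
        have hpos : 0 < S.card := Finset.card_pos.mpr ⟨f, hf⟩
        omega
      obtain ⟨v, hvf, hve⟩ := Finset.not_disjoint_iff.mp (h2 f hf)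
      refine ⟨{v}, by simp [hcard], ?_, fun _ => ⟨v, by simp, hve⟩⟩
      intro f' hf'
      have : f' = f := by
        by_contra hne
        have : f' ∈ S.erase f := Finset.mem_erase.mpr ⟨hne, hf'⟩
        simp [herase] at this
      exact ⟨v, by simp, this ▸ hvf⟩
    · have hgS : g ∈ S := Finset.mem_of_mem_erase hg
      have hgf : g ≠ f := Finset.ne_of_mem_erase hg
      obtain ⟨v, hvf, hvg⟩ := Finset.not_disjoint_iff.mp (h1 f hf g hgS (Ne.symm hgf))
      set S' := (S.erase f).erase g with hS'
      have hsub : S' ⊂ S := by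
        refine Finset.ssubset_iff_of_subset ?_ |>.mpr ⟨f, hf, ?_⟩
        · intro a ha
          exact Finset.mem_of_mem_erase (Finset.mem_of_mem_erase ha)
        · intro ha
          exact (Finset.ne_of_mem_erase (Finset.mem_of_mem_erase ha)) rfl
      have hsub' : S' ⊆ S := hsub.subset
      obtain ⟨T', hT'card, hT'cov, hT'par⟩ :=
        ih S' hsub (fun a ha b hb hab => h1 a (hsub' ha) b (hsub' hb) hab)
          (fun a ha => h2 a (hsub' ha))
      have hScard : S'.card = S.card - 2 := by
        rw [hS', Finset.card_erase_of_mem hg, Finset.card_erase_of_mem hf]; omega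
      have hS2 : 2 ≤ S.card := by
        have : ({g, f} : Finset (Finset V)) ⊆ S := by
          intro a ha; rcases Finset.mem_insert.mp ha with rfl | ha
          · exact hgS
          · simp at ha; exact ha ▸ hf
        calc 2 = ({g, f} : Finset (Finset V)).card := by rw [Finset.card_insert_of_notMem (by simp [hgf]), Finset.card_singleton]
        _ ≤ S.card := Finset.card_le_card this
      refine ⟨insert v T', ?_, ?_, ?_⟩
      · calc (insert v T').card ≤ T'.card + 1 := Finset.card_insert_le _ _
          _ ≤ (S.card + 1) / 2 := by omega
      · intro a ha
        by_cases haf : a = f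
        · exact ⟨v, Finset.mem_insert_self _ _, haf ▸ hvf⟩
        by_cases hag : a = g
        · exact ⟨v, Finset.mem_insert_self _ _, hag ▸ hvg⟩
        · obtain ⟨u, hu, hua⟩ := hT'cov a (by
            rw [hS']; exact Finset.mem_erase.mpr ⟨hag, Finset.mem_erase.mpr ⟨haf, ha⟩⟩)
          exact ⟨u, Finset.mem_insert_of_mem hu, hua⟩
      · intro hpar
        obtain ⟨u, hu, hue⟩ := hT'par (by omega)
        exact ⟨u, Finset.mem_insert_of_mem hu, hue⟩

private lemma nbr_card_le {V : Type*} [DecidableEq V] (H : Finset (Finset V))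
    (hdeg : ∀ v : V, (H.filter fun e => v ∈ e).card ≤ 2)
    (e : Finset V) (heH : e ∈ H) (hene : e.Nonempty) :
    (H.filter fun f => f ≠ e ∧ ¬ Disjoint f e).card ≤ e.card := by
  classical
  set φ : Finset V → V := fun f =>
    if h : ∃ v, v ∈ f ∧ v ∈ e then h.choose else hene.choose with hφ
  have hφspec : ∀ f, ¬ Disjoint f e → φ f ∈ f ∧ φ f ∈ e := by
    intro f hd
    obtain ⟨v, hv1, hv2⟩ := Finset.not_disjoint_iff.mp hd
    have hex : ∃ v, v ∈ f ∧ v ∈ e := ⟨v, hv1, hv2⟩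
    rw [hφ]; simp only [hex, dif_pos]
    exact hex.choose_spec
  apply Finset.card_le_card_of_injOn φ
  · intro f hfmem
    rw [Finset.mem_coe, Finset.mem_filter] at hfmem
    exact (hφspec f hfmem.2.2).2
  · intro f hfmem g hgmem hfg
    simp only [Finset.coe_filter, Set.mem_setOf_eq] at hfmem hgmem
    by_contra hne
    set v := φ f with hv
    have hvf : v ∈ f := (hφspec f hfmem.2.2).1
    have hvg : v ∈ g := hfg ▸ (hφspec g hgmem.2.2).1
    have hve : v ∈ e := (hφspec f hfmem.2.2).2
    have hsub : ({f, g, e} : Finset (Finset V)) ⊆ H.filter fun e' => v ∈ e' := by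
      intro a ha
      simp only [Finset.mem_insert, Finset.mem_singleton] at ha
      rcases ha with rfl | rfl | rfl
      · exact Finset.mem_filter.mpr ⟨hfmem.1, hvf⟩
      · exact Finset.mem_filter.mpr ⟨hgmem.1, hvg⟩
      · exact Finset.mem_filter.mpr ⟨heH, hve⟩
    have h3 : ({f, g, e} : Finset (Finset V)).card = 3 := by
      rw [Finset.card_insert_of_notMem (by simp [hne, hfmem.2.1]),
        Finset.card_insert_of_notMem (by simp [hgmem.2.1]), Finset.card_singleton]
    have := Finset.card_le_card hsub
    have := hdeg v
    omega



/-- An r-uniform hypergraph (r ≥ 3) with maximum degree at most 2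
satisfies τ(H) ≤ (r − 1)·ν(H). Here ν is any upper bound on the sizes of
matchings (in particular the matching number). -/
theorem stmt_14 {V : Type*} [Fintype V] [DecidableEq V] (r : ℕ) (hr : 3 ≤ r)
    (H : Finset (Finset V))
    (hunif : ∀ e ∈ H, e.card = r)
    (hdeg : ∀ v : V, (H.filter fun e => v ∈ e).card ≤ 2)
    (ν : ℕ)
    (hν : ∀ M ⊆ H, (∀ e ∈ M, ∀ f ∈ M, e ≠ f → Disjoint e f) → M.card ≤ ν) :
    ∃ T : Finset V, (∀ e ∈ H, ∃ v ∈ T, v ∈ e) ∧ T.card ≤ (r - 1) * ν := by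
  classical
  by_cases hHe : H = ∅
  · exact ⟨∅, by simp [hHe], by simp⟩
  obtain ⟨e0, he0⟩ := Finset.nonempty_iff_ne_empty.mpr hHe
  have hedgene : ∀ e ∈ H, e.Nonempty := by
    intro e he
    rw [← Finset.card_pos, hunif e he]; omega
  obtain ⟨v0, hv0⟩ := hedgene e0 he0
  -- maximum matching M
  obtain ⟨M, hMmem, hMmax⟩ := Finset.exists_max_image
    (H.powerset.filter fun M => ∀ e ∈ M, ∀ f ∈ M, e ≠ f → Disjoint e f)
    Finset.card ⟨∅, by simp⟩
  rw [Finset.mem_filter, Finset.mem_powerset] at hMmem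
  obtain ⟨hMH, hMdisj⟩ := hMmem
  have hMmax' : ∀ M' ⊆ H, (∀ e ∈ M', ∀ f ∈ M', e ≠ f → Disjoint e f) →
      M'.card ≤ M.card := by
    intro M' h1 h2
    exact hMmax M' (Finset.mem_filter.mpr ⟨Finset.mem_powerset.mpr h1, h2⟩)
  -- definitions
  set excl : Finset V → Finset (Finset V) := fun e =>
    H.filter fun f => f ∉ M ∧ ¬ Disjoint f e ∧ ∀ e' ∈ M, e' ≠ e → Disjoint f e'
    with hexcl
  set NE : Finset (Finset V) :=
    H.filter fun f => f ∉ M ∧ 2 ≤ (M.filter fun e => ¬ Disjoint e f).card with hNE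
  set x : Finset V → ℕ := fun e => (excl e).card with hx
  set cap : Finset V → ℕ := fun e => r - 1 - (x e + 1) / 2 with hcap
  -- K1: every edge outside M meets some M-edge
  have K1 : ∀ f ∈ H, f ∉ M → ∃ e ∈ M, ¬ Disjoint e f := by
    intro f hfH hfM
    by_contra hcon
    push_neg at hcon
    have hins : insert f M ⊆ H := by
      intro a ha; rcases Finset.mem_insert.mp ha with rfl | ha
      · exact hfH
      · exact hMH ha
    have hinsdisj : ∀ a ∈ insert f M, ∀ b ∈ insert f M, a ≠ b → Disjoint a b := by
      intro a ha b hb hab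
      rcases Finset.mem_insert.mp ha with h1 | h1 <;>
        rcases Finset.mem_insert.mp hb with h2 | h2
      · exact absurd (h1.trans h2.symm) hab
      · rw [h1]; exact (hcon b h2).symm
      · rw [h2]; exact hcon a h1
      · exact hMdisj a h1 b h2 hab
    have := hMmax' _ hins hinsdisj
    rw [Finset.card_insert_of_notMem hfM] at this
    omega
  -- K2: edges outside M and NE are exclusive to a unique M-edge
  have K2 : ∀ f ∈ H, f ∉ M → f ∉ NE → ∃ e ∈ M, f ∈ excl e := by
    intro f hfH hfM hfNE
    obtain ⟨e, heM, hed⟩ := K1 f hfH hfM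
    refine ⟨e, heM, ?_⟩
    rw [hexcl]
    refine Finset.mem_filter.mpr ⟨hfH, hfM, fun h => hed h.symm, ?_⟩
    intro e' he' hne
    by_contra hde'
    have hsub : ({e, e'} : Finset (Finset V)) ⊆ M.filter fun a => ¬ Disjoint a f := by
      intro a ha
      rcases Finset.mem_insert.mp ha with rfl | ha
      · exact Finset.mem_filter.mpr ⟨heM, hed⟩
      · rw [Finset.mem_singleton] at ha
        exact Finset.mem_filter.mpr ⟨ha ▸ he', ha ▸ fun h => hde' h.symm⟩
    have h2 : ({e, e'} : Finset (Finset V)).card = 2 := by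
      rw [Finset.card_insert_of_notMem (by simp [Ne.symm hne]), Finset.card_singleton]
    have hc := Finset.card_le_card hsub
    apply hfNE
    rw [hNE]
    exact Finset.mem_filter.mpr ⟨hfH, hfM, by omega⟩
  -- K4: exclusive edges of e pairwise intersect
  have K4 : ∀ e ∈ M, ∀ f ∈ excl e, ∀ g ∈ excl e, f ≠ g → ¬ Disjoint f g := by
    intro e heM f hf g hg hfg hdisj
    rw [hexcl, Finset.mem_filter] at hf hg
    obtain ⟨hfH, hfM, hfe, hfd⟩ := hf
    obtain ⟨hgH, hgM, hge, hgd⟩ := hg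
    set M' := insert f (insert g (M.erase e)) with hM'
    have hsubH : M' ⊆ H := by
      intro a ha
      rcases Finset.mem_insert.mp ha with rfl | ha
      · exact hfH
      rcases Finset.mem_insert.mp ha with rfl | ha
      · exact hgH
      · exact hMH (Finset.mem_of_mem_erase ha)
    have hdisj' : ∀ a ∈ M', ∀ b ∈ M', a ≠ b → Disjoint a b := by
      have key : ∀ a, a ∈ M.erase e → Disjoint f a ∧ Disjoint g a := by
        intro a ha
        have haM := Finset.mem_of_mem_erase ha
        have hane := Finset.ne_of_mem_erase ha
        exact ⟨hfd a haM hane, hgd a haM hane⟩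
      have hone : ∀ a ∈ M', a = f ∨ a = g ∨ a ∈ M.erase e := by
        intro a ha
        rcases Finset.mem_insert.mp ha with h | h
        · exact Or.inl h
        rcases Finset.mem_insert.mp h with h | h
        · exact Or.inr (Or.inl h)
        · exact Or.inr (Or.inr h)
      intro a ha b hb hab
      rcases hone a ha with h1 | h1 | h1 <;> rcases hone b hb with h2 | h2 | h2 <;>
        subst_vars
      · exact absurd rfl hab
      · exact hdisj
      · exact (key b h2).1
      · exact hdisj.symm
      · exact absurd rfl hab
      · exact (key b h2).2
      · exact ((key a h1).1).symm
      · exact ((key a h1).2).symm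
      · exact hMdisj a (Finset.mem_of_mem_erase h1) b (Finset.mem_of_mem_erase h2) hab
    have hcard : M'.card = M.card + 1 := by
      have hgnot : g ∉ M.erase e := fun h => hgM (Finset.mem_of_mem_erase h)
      have hfnot : f ∉ insert g (M.erase e) := by
        intro h
        rcases Finset.mem_insert.mp h with rfl | h
        · exact hfg rfl
        · exact hfM (Finset.mem_of_mem_erase h)
      rw [hM', Finset.card_insert_of_notMem hfnot, Finset.card_insert_of_notMem hgnot,
        Finset.card_erase_of_mem heM]
      have : 0 < M.card := Finset.card_pos.mpr ⟨e, heM⟩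
      omega
    have := hMmax' M' hsubH hdisj'
    omega
  -- K3 : degree bound per matching edge
  have K3 : ∀ e ∈ M, x e + (NE.filter fun f => ¬ Disjoint e f).card ≤ r := by
    intro e heM
    have heH : e ∈ H := hMH heM
    have hN := nbr_card_le H hdeg e heH (hedgene e heH)
    rw [hunif e heH] at hN
    have hdisjAB : Disjoint (excl e) (NE.filter fun f => ¬ Disjoint e f) := by
      rw [Finset.disjoint_left]
      intro f hfA hfB
      rw [hexcl, Finset.mem_filter] at hfA
      rw [Finset.mem_filter, hNE, Finset.mem_filter] at hfB
      obtain ⟨hfH, hfM, hfe, hfd⟩ := hfA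
      obtain ⟨⟨_, _, hf2⟩, _⟩ := hfB
      have hsub : (M.filter fun a => ¬ Disjoint a f) ⊆ {e} := by
        intro a ha
        rw [Finset.mem_filter] at ha
        rw [Finset.mem_singleton]
        by_contra hne
        exact ha.2 ((hfd a ha.1 hne).symm)
      have := Finset.card_le_card hsub
      simp at this
      omega
    have hsubN : excl e ∪ (NE.filter fun f => ¬ Disjoint e f) ⊆
        H.filter fun f => f ≠ e ∧ ¬ Disjoint f e := by
      intro f hf
      rcases Finset.mem_union.mp hf with hf | hf
      · rw [hexcl, Finset.mem_filter] at hf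
        obtain ⟨hfH, hfM, hfe, _⟩ := hf
        exact Finset.mem_filter.mpr ⟨hfH, fun h => hfM (h ▸ heM), hfe⟩
      · rw [Finset.mem_filter, hNE, Finset.mem_filter] at hf
        obtain ⟨⟨hfH, hfM, _⟩, hfd⟩ := hf
        exact Finset.mem_filter.mpr ⟨hfH, fun h => hfM (h ▸ heM),
          fun h => hfd h.symm⟩
    have := Finset.card_le_card hsubN
    rw [Finset.card_union_of_disjoint hdisjAB] at this
    have hxe : x e = (excl e).card := by rw [hx]
    omega
  -- Hall's theorem application
  set t : {f : Finset V // f ∈ NE} → Finset (Finset V × ℕ) := fun f =>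
    (M.filter fun e => ¬ Disjoint e ↑f).biUnion
      fun e => {e} ×ˢ Finset.range (cap e) with ht
  have hallcond : ∀ s : Finset {f : Finset V // f ∈ NE},
      s.card ≤ (s.biUnion t).card := by
    intro s
    set E' := s.biUnion (fun f : {f : Finset V // f ∈ NE} =>
      M.filter fun e => ¬ Disjoint e ↑f) with hE'
    have hE'M : E' ⊆ M := by
      intro a ha
      rw [hE'] at ha
      obtain ⟨f, hf, hfa⟩ := Finset.mem_biUnion.mp ha
      exact (Finset.mem_filter.mp hfa).1
    have step1 : s.biUnion t = E'.biUnion (fun e => {e} ×ˢ Finset.range (cap e)) := by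
      ext p
      simp only [ht, hE', Finset.mem_biUnion, Finset.mem_filter, Finset.mem_product,
        Finset.mem_singleton, Finset.mem_range]
      tauto
    have step2 : (E'.biUnion (fun e => {e} ×ˢ Finset.range (cap e))).card
        = ∑ e ∈ E', cap e := by
      rw [Finset.card_biUnion]
      · apply Finset.sum_congr rfl
        intro e _
        rw [Finset.card_product]
        simp
      · intro a _ b _ hab
        simp only [Function.onFun]
        rw [Finset.disjoint_left]
        rintro p hp hp'
        rw [Finset.mem_product, Finset.mem_singleton] at hp hp'
        exact hab (hp.1.symm.trans hp'.1)
    have step3 : 2 * s.card ≤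
        ∑ f ∈ s, (M.filter fun e => ¬ Disjoint e (↑f : Finset V)).card := by
      have h1 : ∑ f ∈ s, 2 ≤
          ∑ f ∈ s, (M.filter fun e => ¬ Disjoint e (↑f : Finset V)).card := by
        apply Finset.sum_le_sum
        intro f _
        exact (Finset.mem_filter.mp f.2).2.2
      rw [Finset.sum_const, smul_eq_mul, mul_comm] at h1
      exact h1
    have step4 : ∑ f ∈ s, (M.filter fun e => ¬ Disjoint e (↑f : Finset V)).card
        = ∑ e ∈ M, (s.filter fun f : {f : Finset V // f ∈ NE} =>
            ¬ Disjoint e ↑f).card := by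
      simp only [Finset.card_filter]
      exact Finset.sum_comm
    have step5 : ∑ e ∈ M, (s.filter fun f : {f : Finset V // f ∈ NE} =>
          ¬ Disjoint e ↑f).card
        = ∑ e ∈ E', (s.filter fun f : {f : Finset V // f ∈ NE} =>
          ¬ Disjoint e ↑f).card := by
      symm
      apply Finset.sum_subset hE'M
      intro e heM heE'
      rw [Finset.card_eq_zero, Finset.filter_eq_empty_iff]
      intro f hf hd
      apply heE'
      rw [hE']
      exact Finset.mem_biUnion.mpr ⟨f, hf, Finset.mem_filter.mpr ⟨heM, hd⟩⟩
    have step6 : ∀ e ∈ E', (s.filter fun f : {f : Finset V // f ∈ NE} =>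
        ¬ Disjoint e ↑f).card ≤ 2 * cap e := by
      intro e heE'
      have heM := hE'M heE'
      have hle : (s.filter fun f : {f : Finset V // f ∈ NE} => ¬ Disjoint e ↑f).card
          ≤ (NE.filter fun f => ¬ Disjoint e f).card := by
        apply Finset.card_le_card_of_injOn (fun f : {f : Finset V // f ∈ NE} => (f : Finset V))
        · intro f hf
          rw [Finset.mem_coe, Finset.mem_filter] at hf
          exact Finset.mem_filter.mpr ⟨f.2, hf.2⟩
        · intro a _ b _ h
          exact Subtype.ext h
      have hK3 := K3 e heM
      have hcape : cap e = r - 1 - (x e + 1) / 2 := by rw [hcap]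
      omega
    have hfin : ∑ e ∈ E', (s.filter fun f : {f : Finset V // f ∈ NE} =>
        ¬ Disjoint e ↑f).card ≤ ∑ e ∈ E', 2 * cap e := Finset.sum_le_sum step6
    rw [← Finset.mul_sum] at hfin
    rw [step1, step2]
    refine Nat.le_of_mul_le_mul_left ?_ (show 0 < 2 by norm_num)
    omega
  obtain ⟨σ, hσinj, hσmem⟩ :=
    (Finset.all_card_le_biUnion_card_iff_exists_injective t).mp hallcond
  have hσ : ∀ f : {f : Finset V // f ∈ NE}, (σ f).1 ∈ M ∧ ¬ Disjoint (σ f).1 ↑f ∧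
      (σ f).2 < cap (σ f).1 := by
    intro f
    have hmem := hσmem f
    rw [ht] at hmem
    obtain ⟨e, he, hp⟩ := Finset.mem_biUnion.mp hmem
    rw [Finset.mem_filter] at he
    rw [Finset.mem_product, Finset.mem_singleton, Finset.mem_range] at hp
    rw [hp.1]
    exact ⟨he.1, he.2, hp.2⟩
  -- choose covers of exclusive families
  have hA : ∀ e, ∃ TA : Finset V, e ∈ M →
      (TA.card ≤ (x e + 1) / 2 ∧ (∀ f ∈ excl e, ∃ v ∈ TA, v ∈ f) ∧
        (x e % 2 = 1 → ∃ v ∈ TA, v ∈ e)) := by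
    intro e
    by_cases heM : e ∈ M
    · obtain ⟨TA, h1, h2, h3⟩ := cover_intersecting e (excl e) (K4 e heM)
        (fun f hf => (Finset.mem_filter.mp hf).2.2.1)
      exact ⟨TA, fun _ => ⟨h1, h2, h3⟩⟩
    · exact ⟨∅, fun h => absurd h heM⟩
  choose A hAspec using hA
  set w : {f : Finset V // f ∈ NE} → V := fun f =>
    if h : ∃ v, v ∈ (σ f).1 ∧ v ∈ (f : Finset V) then h.choose else v0 with hw
  have hwspec : ∀ f : {f : Finset V // f ∈ NE},
      w f ∈ (σ f).1 ∧ w f ∈ (f : Finset V) := by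
    intro f
    obtain ⟨v, hv1, hv2⟩ := Finset.not_disjoint_iff.mp (hσ f).2.1
    have hex : ∃ v, v ∈ (σ f).1 ∧ v ∈ (f : Finset V) := ⟨v, hv1, hv2⟩
    rw [hw]; simp only [hex, dif_pos]; exact hex.choose_spec
  set B : Finset V → Finset V := fun e =>
    (Finset.univ.filter fun f : {f : Finset V // f ∈ NE} => (σ f).1 = e).image w
    with hB
  have hBcard : ∀ e, (B e).card ≤ cap e := by
    intro e
    show ((Finset.univ.filter fun f : {f : Finset V // f ∈ NE} =>
      (σ f).1 = e).image w).card ≤ cap e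
    calc ((Finset.univ.filter fun f : {f : Finset V // f ∈ NE} =>
          (σ f).1 = e).image w).card
        ≤ (Finset.univ.filter fun f : {f : Finset V // f ∈ NE} =>
          (σ f).1 = e).card := Finset.card_image_le
      _ ≤ ({e} ×ˢ Finset.range (cap e)).card := by
          apply Finset.card_le_card_of_injOn σ
          · intro f hf
            rw [Finset.mem_coe, Finset.mem_filter] at hf
            rw [Finset.mem_coe, Finset.mem_product, Finset.mem_singleton, Finset.mem_range]
            exact ⟨hf.2, hf.2 ▸ (hσ f).2.2⟩
          · intro a _ b _ h
            exact hσinj h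
      _ = cap e := by rw [Finset.card_product]; simp
  have hBmem : ∀ e, ∀ v ∈ B e, v ∈ e := by
    intro e v hv
    have hv' : v ∈ (Finset.univ.filter fun f : {f : Finset V // f ∈ NE} =>
      (σ f).1 = e).image w := hv
    obtain ⟨f, hf, rfl⟩ := Finset.mem_image.mp hv'
    have h1 := (hwspec f).1
    rw [(Finset.mem_filter.mp hf).2] at h1
    exact h1
  set ve : Finset V → V := fun e => if h : ∃ v, v ∈ e then h.choose else v0 with hve'
  have hvespec : ∀ e ∈ M, ve e ∈ e := by
    intro e heM
    obtain ⟨v, hv⟩ := hedgene e (hMH heM)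
    have hex : ∃ v, v ∈ e := ⟨v, hv⟩
    rw [hve']; simp only [hex, dif_pos]; exact hex.choose_spec
  set C : Finset V → Finset V := fun e =>
    if ∃ v ∈ A e ∪ B e, v ∈ e then ∅ else {ve e} with hC
  have hcovM : ∀ e ∈ M, ∃ v ∈ A e ∪ B e ∪ C e, v ∈ e := by
    intro e heM
    by_cases hc : ∃ v ∈ A e ∪ B e, v ∈ e
    · obtain ⟨v, hv, hve2⟩ := hc
      exact ⟨v, Finset.mem_union_left _ hv, hve2⟩
    · refine ⟨ve e, ?_, hvespec e heM⟩
      apply Finset.mem_union_right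
      show ve e ∈ (if ∃ v ∈ A e ∪ B e, v ∈ e then (∅ : Finset V) else {ve e})
      rw [if_neg hc]
      exact Finset.mem_singleton_self _
  refine ⟨M.biUnion (fun e => A e ∪ B e ∪ C e), ?_, ?_⟩
  · -- coverage
    intro g hg
    by_cases hgM : g ∈ M
    · obtain ⟨v, hv, hvg⟩ := hcovM g hgM
      exact ⟨v, Finset.mem_biUnion.mpr ⟨g, hgM, hv⟩, hvg⟩
    by_cases hgNE : g ∈ NE
    · set f : {f : Finset V // f ∈ NE} := ⟨g, hgNE⟩ with hf
      have h2 := (hwspec f).2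
      have hfB : w f ∈ B (σ f).1 := by
        show w f ∈ (Finset.univ.filter fun f' : {f : Finset V // f ∈ NE} =>
          (σ f').1 = (σ f).1).image w
        exact Finset.mem_image.mpr ⟨f, Finset.mem_filter.mpr ⟨Finset.mem_univ f, rfl⟩, rfl⟩
      exact ⟨w f, Finset.mem_biUnion.mpr ⟨(σ f).1, (hσ f).1,
        Finset.mem_union_left _ (Finset.mem_union_right _ hfB)⟩, h2⟩
    · obtain ⟨e, heM, hge⟩ := K2 g hg hgM hgNE
      obtain ⟨-, hcov, -⟩ := hAspec e heM
      obtain ⟨v, hv, hvg⟩ := hcov g hge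
      exact ⟨v, Finset.mem_biUnion.mpr ⟨e, heM,
        Finset.mem_union_left _ (Finset.mem_union_left _ hv)⟩, hvg⟩
  · -- cardinality
    have hTe : ∀ e ∈ M, (A e ∪ B e ∪ C e).card ≤ r - 1 := by
      intro e heM
      obtain ⟨hAcard, hAcov, hApar⟩ := hAspec e heM
      have hxr : x e ≤ r := by have := K3 e heM; omega
      have hBc := hBcard e
      have hcape : cap e = r - 1 - (x e + 1) / 2 := by rw [hcap]
      have hunle : (A e ∪ B e ∪ C e).card ≤ (A e).card + (B e).card + (C e).card := by
        calc (A e ∪ B e ∪ C e).card ≤ (A e ∪ B e).card + (C e).card :=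
            Finset.card_union_le _ _
          _ ≤ (A e).card + (B e).card + (C e).card := by
            have := Finset.card_union_le (A e) (B e)
            omega
      by_cases hc : ∃ v ∈ A e ∪ B e, v ∈ e
      · have hCe : C e = ∅ := by
          show (if ∃ v ∈ A e ∪ B e, v ∈ e then (∅ : Finset V) else {ve e}) = ∅
          rw [if_pos hc]
        have hC0 : (C e).card = 0 := by rw [hCe]; simp
        omega
      · have hBe : (B e).card = 0 := by
          rw [Finset.card_eq_zero, Finset.eq_empty_iff_forall_notMem]
          intro v hv
          exact hc ⟨v, Finset.mem_union_right _ hv, hBmem e v hv⟩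
        have hxeven : x e % 2 = 0 := by
          by_contra hodd
          obtain ⟨v, hv, hve2⟩ := hApar (by omega)
          exact hc ⟨v, Finset.mem_union_left _ hv, hve2⟩
        have hCe : (C e).card ≤ 1 := by
          show (if ∃ v ∈ A e ∪ B e, v ∈ e then (∅ : Finset V) else {ve e}).card ≤ 1
          split <;> simp
        omega
    calc (M.biUnion fun e => A e ∪ B e ∪ C e).card
        ≤ ∑ e ∈ M, (A e ∪ B e ∪ C e).card := Finset.card_biUnion_le
      _ ≤ ∑ _e ∈ M, (r - 1) := Finset.sum_le_sum hTe
      _ = M.card * (r - 1) := by rw [Finset.sum_const, smul_eq_mul]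
      _ ≤ ν * (r - 1) := Nat.mul_le_mul_right _ (hν M hMH hMdisj)
      _ = (r - 1) * ν := Nat.mul_comm _ _
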